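/- Let P ⊂ ℝ² be a 1-unconditional convex body (so (x,y) ∈ P implies (±x, ±y) ∈ P) containing the origin in its interior, let P* = {(x′,y′) ∈ ℝ² : x x′ + y y′ ≤ 1 for all (x,y) ∈ P} be its planar polar body, and let R = {(x,y,z) ∈ ℝ³ : (x, √(y²+z²)) ∈ P} and R′ = {(x,y,z) ∈ ℝ³ : (x, √(y²+z²)) ∈ P*} be the bodies of revolution about the X-axis generated by P and P* respectively. Then R′ = R*. -/

import Mathlib

open MeasureTheory Real Set

noncomputable def dot3 (x y : ℝ × ℝ × ℝ) : ℝ :=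
  x.1 * y.1 + x.2.1 * y.2.1 + x.2.2 * y.2.2

def polar3 (K : Set (ℝ × ℝ × ℝ)) : Set (ℝ × ℝ × ℝ) :=
  {x | ∀ y ∈ K, dot3 x y ≤ 1}

noncomputable def dot2 (x y : ℝ × ℝ) : ℝ := x.1 * y.1 + x.2 * y.2

def polar2 (K : Set (ℝ × ℝ)) : Set (ℝ × ℝ) :=
  {x | ∀ y ∈ K, dot2 x y ≤ 1}

/-- If `P` is a 1-unconditional convex body in the plane with the origin in its
interior, and `R`, `R′` are the bodies of revolution about the X-axis generated by
`P` and `P*` respectively, then `R′ = R*`. -/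
lemma cs2 (b c y z : ℝ) : b*y + c*z ≤ Real.sqrt (b^2+c^2) * Real.sqrt (y^2+z^2) := by
  rw [← Real.sqrt_mul (by positivity)]
  calc b*y + c*z ≤ |b*y + c*z| := le_abs_self _
    _ = Real.sqrt ((b*y + c*z)^2) := (Real.sqrt_sq_eq_abs _).symm
    _ ≤ Real.sqrt ((b^2+c^2)*(y^2+z^2)) := by
        apply Real.sqrt_le_sqrt; nlinarith [sq_nonneg (b*z - c*y)]

theorem revolution_of_polar_eq_polar_of_revolution (P : Set (ℝ × ℝ))
    (hconv : Convex ℝ P) (hcomp : IsCompact P)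
    (h0 : (0 : ℝ × ℝ) ∈ interior P)
    (huncond : ∀ p ∈ P, ∀ ε δ : ℝ, (ε = 1 ∨ ε = -1) → (δ = 1 ∨ δ = -1) →
      (ε * p.1, δ * p.2) ∈ P)
    (R R' : Set (ℝ × ℝ × ℝ))
    (hR : R = {p : ℝ × ℝ × ℝ | ((p.1, Real.sqrt (p.2.1 ^ 2 + p.2.2 ^ 2)) : ℝ × ℝ) ∈ P})
    (hR' : R' = {p : ℝ × ℝ × ℝ |
      ((p.1, Real.sqrt (p.2.1 ^ 2 + p.2.2 ^ 2)) : ℝ × ℝ) ∈ polar2 P}) :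
    R' = polar3 R := by
  subst hR hR'
  ext ⟨a, b, c⟩
  simp only [Set.mem_setOf_eq, polar3, polar2, dot3, dot2]
  constructor
  · rintro h ⟨x, y, z⟩ hxyz
    simp only [Set.mem_setOf_eq] at hxyz
    have h1 := h _ hxyz
    simp only at h1
    have h2 := cs2 b c y z
    have hs : 0 ≤ Real.sqrt (b^2+c^2) := Real.sqrt_nonneg _
    simp only
    linarith
  · intro h ⟨x, r⟩ hq
    simp only [Set.mem_setOf_eq] at h ⊢
    set s := Real.sqrt (b^2+c^2) with hs_def
    have hs0 : 0 ≤ s := Real.sqrt_nonneg _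
    have hss : s^2 = b^2+c^2 := Real.sq_sqrt (by positivity)
    have habs : ((x, |r|) : ℝ × ℝ) ∈ P := by
      rcases le_or_gt 0 r with hr | hr
      · simpa [abs_of_nonneg hr] using huncond _ hq 1 1 (Or.inl rfl) (Or.inl rfl)
      · have := huncond _ hq 1 (-1) (Or.inl rfl) (Or.inr rfl)
        simpa [abs_of_neg hr] using this
    rcases eq_or_lt_of_le hs0 with hs0' | hs0'
    · -- s = 0, so b = c = 0
      have hbc : b^2 + c^2 = 0 := by
        have := hss; rw [← hs0'] at this; simpa using this.symm
      have hb : b = 0 := by nlinarith [sq_nonneg b, sq_nonneg c]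
      have hc : c = 0 := by nlinarith [sq_nonneg b, sq_nonneg c]
      have hmem : ((x, Real.sqrt ((0:ℝ)^2 + (0:ℝ)^2)) : ℝ × ℝ) ∈ P := by
        have hneg : ((x, -|r|) : ℝ × ℝ) ∈ P := by
          simpa using huncond _ habs 1 (-1) (Or.inl rfl) (Or.inr rfl)
        have := hconv habs hneg (by norm_num : (0:ℝ) ≤ 1/2) (by norm_num : (0:ℝ) ≤ 1/2) (by norm_num)
        simp only [Prod.smul_mk, smul_eq_mul, Prod.mk_add_mk] at this
        have h0r : Real.sqrt ((0:ℝ)^2 + (0:ℝ)^2) = 0 := by simp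
        rw [h0r]
        convert this using 2 <;> ring
      have := h (x, 0, 0) hmem
      simp only [hb, hc] at this ⊢
      rw [← hs0']
      nlinarith
    · -- s > 0
      have hmem : ((x, (|r| * b) / s, (|r| * c) / s) : ℝ × ℝ × ℝ) ∈
          {p : ℝ × ℝ × ℝ | ((p.1, Real.sqrt (p.2.1 ^ 2 + p.2.2 ^ 2)) : ℝ × ℝ) ∈ P} := by
        simp only [Set.mem_setOf_eq]
        have : ((|r| * b) / s)^2 + ((|r| * c) / s)^2 = |r|^2 := by
          field_simp
          linear_combination -|r|^2 * hss
        rw [this, Real.sqrt_sq_eq_abs, abs_abs]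
        exact habs
      have h1 := h _ hmem
      simp only at h1
      have hexp : a * x + b * ((|r| * b) / s) + c * ((|r| * c) / s) = a*x + |r| * s := by
        field_simp
        linear_combination -|r| * hss
      rw [hexp] at h1
      have : s * r ≤ |r| * s := by
        rcases abs_cases r with ⟨h1, h2⟩ | ⟨h1, h2⟩ <;> nlinarith
      linarith
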